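/- If the posterior matching scheme is reliable (i.e., $W$ is a.s. $\sigma(Y_{1:\infty})$-measurable under $\overline{\mathbb{P}}$), then the stationary Markov chain $({\tilde W}_n)_{n\geq 1}$ is $\overline{\mathbb{P}}$-ergodic: its tail sigma-algebra is $\overline{\mathbb{P}}$-trivial. -/

import Mathlib

open MeasureTheory ProbabilityTheory

section Helpers

lemma sup_eq_generateFrom_inter {Ω : Type*} (m1 m2 : MeasurableSpace Ω) :
    m1 ⊔ m2 = MeasurableSpace.generateFrom
      {s | ∃ a b, MeasurableSet[m1] a ∧ MeasurableSet[m2] b ∧ s = a ∩ b} := by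
  refine le_antisymm (sup_le ?_ ?_) (MeasurableSpace.generateFrom_le ?_)
  · intro s hs
    exact MeasurableSpace.measurableSet_generateFrom
      ⟨s, Set.univ, hs, MeasurableSet.univ, (Set.inter_univ s).symm⟩
  · intro s hs
    exact MeasurableSpace.measurableSet_generateFrom
      ⟨Set.univ, s, MeasurableSet.univ, hs, (Set.univ_inter s).symm⟩
  · rintro s ⟨a, b, ha, hb, rfl⟩
    exact ((le_sup_left : m1 ≤ m1 ⊔ m2) a ha).inter ((le_sup_right : m2 ≤ m1 ⊔ m2) b hb)

lemma isPiSystem_inter_sets {Ω : Type*} (m1 m2 : MeasurableSpace Ω) :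
    IsPiSystem {s | ∃ a b, MeasurableSet[m1] a ∧ MeasurableSet[m2] b ∧ s = a ∩ b} := by
  rintro s ⟨a, b, ha, hb, rfl⟩ t ⟨a', b', ha', hb', rfl⟩ -
  exact ⟨a ∩ a', b ∩ b', ha.inter ha', hb.inter hb', by
    ext ω; simp; tauto⟩

lemma indep_sup_left_aux {Ω : Type*} {mΩ : MeasurableSpace Ω} {μ : Measure Ω}
    [IsProbabilityMeasure μ]
    {m1 m2 m3 : MeasurableSpace Ω} (h1 : m1 ≤ mΩ) (h2 : m2 ≤ mΩ) (h3 : m3 ≤ mΩ)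
    (h : ∀ a b c, MeasurableSet[m1] a → MeasurableSet[m2] b → MeasurableSet[m3] c →
      μ ((a ∩ b) ∩ c) = μ (a ∩ b) * μ c) :
    Indep (m1 ⊔ m2) m3 μ := by
  refine IndepSets.indep (sup_le h1 h2) h3 (isPiSystem_inter_sets m1 m2)
    MeasurableSpace.isPiSystem_measurableSet (sup_eq_generateFrom_inter m1 m2)
    MeasurableSpace.generateFrom_measurableSet.symm ((IndepSets_iff _ _ _).mpr ?_)
  rintro s c ⟨a, b, ha, hb, rfl⟩ hc
  exact h a b c ha hb hc

end Helpers

/-- The tail σ-algebra `𝓣 = ⋂ n σ(V_{n:∞})` of a process. -/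
def tailSigma {Ω 𝒱 : Type*} [MeasurableSpace 𝒱] (V : ℕ → Ω → 𝒱) : MeasurableSpace Ω :=
  ⨅ n, ⨆ k, MeasurableSpace.comap (V (n + k)) inferInstance

/-- Necessity direction of Theorem 3: if a posterior matching scheme is reliable (`W` is
a.s. `σ(Y_{1:∞})`-measurable), then the chain `(W̃_n)` is ergodic: its tail σ-algebra is
`ℙ̄`-trivial. -/
theorem pm_reliable_implies_ergodic
    {Ω 𝒲 𝒴 𝒩 : Type*} {mΩ : MeasurableSpace Ω}
    [MeasurableSpace 𝒲] [StandardBorelSpace 𝒲] [Nonempty 𝒲]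
    [MeasurableSpace 𝒴] [MeasurableSpace 𝒩]
    (μ : Measure Ω) [IsProbabilityMeasure μ]
    (W : Ω → 𝒲) (hW : Measurable W)
    (N : ℕ → Ω → 𝒩) (hN : ∀ n, Measurable (N n))
    -- memoryless time-invariant channel: i.i.d. noise independent of the message
    (hiid : iIndepFun N μ)
    (hident : ∀ n, Measure.map (N n) μ = Measure.map (N 0) μ)
    (hindep : IndepFun W (fun ω (n : ℕ) => N n ω) μ)
    (g : 𝒲 → 𝒩 → 𝒴) (hg : Measurable fun p : 𝒲 × 𝒩 => g p.1 p.2)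
    (S : 𝒴 → 𝒲 → 𝒲) (hS : Measurable fun p : 𝒴 × 𝒲 => S p.1 p.2)
    -- the posterior matching maps are invertible
    (hSinv : ∀ y, Function.Bijective (S y))
    (Wt : ℕ → Ω → 𝒲) (Y : ℕ → Ω → 𝒴)
    (hWt : ∀ n, Measurable (Wt n)) (hY : ∀ n, Measurable (Y n))
    (hW0 : Wt 0 = W)
    (hYdef : ∀ n ω, Y n ω = g (Wt n ω) (N n ω))
    (hrec : ∀ n ω, Wt (n + 1) ω = S (Y n ω) (Wt n ω))
    -- posterior matching: `S_y # P_{W̃_1|Y_1=y} = P_W` for (almost) all `y`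
    (hPM : ∀ᵐ y ∂(Measure.map (Y 0) μ),
      Measure.map (S y) ((condDistrib (Wt 0) (Y 0) μ) y) = Measure.map W μ)
    -- reliability: `W` is a.s. measurable w.r.t. `σ(Y_{1:∞})`
    (hreliable : ∃ W' : Ω → 𝒲,
      Measurable[⨆ n, MeasurableSpace.comap (Y n) inferInstance] W' ∧ W =ᵐ[μ] W') :
    ∀ E : Set Ω, MeasurableSet[tailSigma Wt] E → μ E = 0 ∨ μ E = 1 := by
  intro E hE
  obtain ⟨W', hW'meas, hWW'⟩ := hreliable
  -- Notation
  set π : Measure 𝒲 := μ.map W with hπ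
  set PN : Measure 𝒩 := μ.map (N 0) with hPNdef
  set ρ : Measure 𝒴 := μ.map (Y 0) with hρdef
  have hπprob : IsProbabilityMeasure π := Measure.isProbabilityMeasure_map hW.aemeasurable
  have hPNprob : IsProbabilityMeasure PN := Measure.isProbabilityMeasure_map (hN 0).aemeasurable
  have hρprob : IsProbabilityMeasure ρ := Measure.isProbabilityMeasure_map (hY 0).aemeasurable
  let mW : ℕ → MeasurableSpace Ω := fun n => MeasurableSpace.comap (Wt n) inferInstance
  let mN : ℕ → MeasurableSpace Ω := fun i => MeasurableSpace.comap (N i) inferInstance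
  let mY : ℕ → MeasurableSpace Ω := fun i => MeasurableSpace.comap (Y i) inferInstance
  let GY : ℕ → MeasurableSpace Ω := fun n => ⨆ i, ⨆ (_ : i < n), mY i
  let A : ℕ → MeasurableSpace Ω :=
    fun n => MeasurableSpace.comap W inferInstance ⊔ (⨆ i, ⨆ (_ : i < n), mN i)
  let B : ℕ → MeasurableSpace Ω := fun n => ⨆ k, mN (n + k)
  let M : ℕ → MeasurableSpace Ω := fun n => mW n ⊔ B n
  -- basic ≤ facts
  have hmWle : ∀ n, mW n ≤ mΩ := fun n => (hWt n).comap_le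
  have hmNle : ∀ i, mN i ≤ mΩ := fun i => (hN i).comap_le
  have hmYle : ∀ i, mY i ≤ mΩ := fun i => (hY i).comap_le
  have hGYle : ∀ n, GY n ≤ mΩ := fun n => iSup₂_le fun i _ => hmYle i
  have hGle : (⨆ n, MeasurableSpace.comap (Y n) inferInstance : MeasurableSpace Ω) ≤ mΩ :=
    iSup_le fun i => hmYle i
  have hAle : ∀ n, A n ≤ mΩ := fun n => sup_le hW.comap_le (iSup₂_le fun i _ => hmNle i)
  have hBle : ∀ n, B n ≤ mΩ := fun n => iSup_le fun k => hmNle (n + k)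
  have hMle : ∀ n, M n ≤ mΩ := fun n => sup_le (hmWle n) (hBle n)
  -- measurability of the chain w.r.t. various σ-algebras
  -- (1) Wt i is A n-measurable for i ≤ n, N i is A n-measurable for i < n
  have hNA : ∀ n i, i < n → Measurable[A n] (N i) := by
    intro n i hi
    refine Measurable.mono (comap_measurable (N i)) ?_ le_rfl
    calc mN i ≤ ⨆ (_ : i < n), mN i := le_iSup (fun (_ : i < n) => mN i) hi
      _ ≤ ⨆ j, ⨆ (_ : j < n), mN j := le_iSup (fun j => ⨆ (_ : j < n), mN j) i
      _ ≤ A n := le_sup_right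
  have hWtA : ∀ n i, i ≤ n → Measurable[A n] (Wt i) := by
    intro n i hi
    induction i with
    | zero =>
      rw [hW0]
      exact Measurable.mono (comap_measurable W) le_sup_left le_rfl
    | succ i ih =>
      have hWi : Measurable[A n] (Wt i) := ih (le_trans (Nat.le_succ i) hi)
      have hNi : Measurable[A n] (N i) := hNA n i (lt_of_lt_of_le (Nat.lt_succ_self i) hi)
      have : Measurable[A n] fun ω => S (g (Wt i ω) (N i ω)) (Wt i ω) :=
        hS.comp ((hg.comp (hWi.prodMk hNi)).prodMk hWi)
      have heq : Wt (i + 1) = fun ω => S (g (Wt i ω) (N i ω)) (Wt i ω) := by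
        funext ω; rw [hrec i ω, hYdef i ω]
      rw [heq]; exact this
  have hYA : ∀ n i, i < n → Measurable[A n] (Y i) := by
    intro n i hi
    have : Measurable[A n] fun ω => g (Wt i ω) (N i ω) :=
      hg.comp ((hWtA n i (le_of_lt hi)).prodMk (hNA n i hi))
    have heq : Y i = fun ω => g (Wt i ω) (N i ω) := by funext ω; exact hYdef i ω
    rw [heq]; exact this
  have hGYA : ∀ n, GY n ≤ A n := fun n => iSup₂_le fun i hi => (hYA n i hi).comap_le
  -- (2) Wt (n+k) and N (n+k) are M n-measurable
  have hNM : ∀ n k, Measurable[M n] (N (n + k)) := by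
    intro n k
    refine Measurable.mono (comap_measurable (N (n + k))) ?_ le_rfl
    exact le_trans (le_iSup (fun k => mN (n + k)) k) le_sup_right
  have hWtM : ∀ n k, Measurable[M n] (Wt (n + k)) := by
    intro n k
    induction k with
    | zero => exact Measurable.mono (comap_measurable (Wt n)) le_sup_left le_rfl
    | succ k ih =>
      have : Measurable[M n] fun ω => S (g (Wt (n + k) ω) (N (n + k) ω)) (Wt (n + k) ω) :=
        hS.comp ((hg.comp (ih.prodMk (hNM n k))).prodMk ih)
      have heq : Wt (n + (k + 1)) = fun ω => S (g (Wt (n + k) ω) (N (n + k) ω)) (Wt (n + k) ω) := by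
        funext ω; rw [show n + (k + 1) = (n + k) + 1 from rfl, hrec (n + k) ω, hYdef (n + k) ω]
      rw [heq]; exact this
  -- E belongs to M n for every n
  have hEM : ∀ n, MeasurableSet[M n] E := by
    intro n
    have h1 : MeasurableSet[⨆ k, MeasurableSpace.comap (Wt (n + k)) inferInstance] E :=
      (iInf_le (fun n => ⨆ k, MeasurableSpace.comap (Wt (n + k)) inferInstance) n) E hE
    exact (iSup_le fun k => (hWtM n k).comap_le : _ ≤ M n) E h1
  -- Independence groundwork
  have hseq : MeasurableSpace.comap (fun ω (n : ℕ) => N n ω) MeasurableSpace.pi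
      = ⨆ i, mN i := by
    rw [MeasurableSpace.pi, MeasurableSpace.comap_iSup]
    exact iSup_congr fun i => by rw [MeasurableSpace.comap_comp]; rfl
  have hWN : Indep (MeasurableSpace.comap W inferInstance) (⨆ i, mN i) μ := by
    have := (IndepFun_iff_Indep _ _ _).mp hindep
    rwa [hseq] at this
  have hNblocks : ∀ n, Indep (⨆ i ∈ {i : ℕ | i < n}, mN i) (⨆ i ∈ {i : ℕ | n ≤ i}, mN i) μ := by
    intro n
    refine indep_iSup_of_disjoint hmNle hiid.iIndep ?_
    exact Set.disjoint_left.mpr fun i (hi : i < n) (hj : n ≤ i) => absurd hj (not_le.mpr hi)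
  have hblle : ∀ n, (⨆ i, ⨆ (_ : i < n), mN i) ≤ ⨆ i, mN i :=
    fun n => iSup₂_le fun i _ => le_iSup mN i
  have hBlle : ∀ n, B n ≤ ⨆ i, mN i := fun n => iSup_le fun k => le_iSup mN (n + k)
  have hBlle' : ∀ n, B n ≤ ⨆ i ∈ {i : ℕ | n ≤ i}, mN i := by
    intro n
    refine iSup_le fun k => ?_
    calc mN (n + k) ≤ ⨆ (_ : n ≤ n + k), mN (n + k) :=
          le_iSup (fun (_ : n ≤ n + k) => mN (n + k)) (Nat.le_add_right n k)
      _ ≤ ⨆ i, ⨆ (_ : n ≤ i), mN i := le_iSup (fun i => ⨆ (_ : n ≤ i), mN i) (n + k)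
  have hAB : ∀ n, Indep (A n) (B n) μ := by
    intro n
    refine indep_sup_left_aux hW.comap_le (le_trans (hblle n) (iSup_le hmNle)) (hBle n) ?_
    intro a b c ha hb hc
    have IWN := (Indep_iff _ _ μ).mp hWN
    have INN := (Indep_iff _ _ μ).mp (hNblocks n)
    have hb' : MeasurableSet[⨆ i ∈ {i : ℕ | i < n}, mN i] b := hb
    have hbc : MeasurableSet[⨆ i, mN i] (b ∩ c) := ((hblle n) b hb).inter ((hBlle n) c hc)
    have h1 : μ (a ∩ (b ∩ c)) = μ a * μ (b ∩ c) := IWN a (b ∩ c) ha hbc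
    have h2 : μ (b ∩ c) = μ b * μ c := INN b c hb' ((hBlle' n) c hc)
    have h3 : μ (a ∩ b) = μ a * μ b := IWN a b ha ((hblle n) b hb)
    rw [Set.inter_assoc, h1, h2, h3, mul_assoc]
  -- Base channel computation via the posterior matching property
  have hpairYW0 : Measurable fun ω => (Y 0 ω, Wt 0 ω) := (hY 0).prodMk (hWt 0)
  have hbase : ∀ (A' : Set 𝒴) (B' : Set 𝒲), MeasurableSet A' → MeasurableSet B' →
      μ (Y 0 ⁻¹' A' ∩ Wt 1 ⁻¹' B') = ρ A' * π B' := by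
    intro A' B' hA' hB'
    have hT : Measurable fun p : 𝒴 × 𝒲 => (p.1, S p.1 p.2) := measurable_fst.prodMk hS
    set s : Set (𝒴 × 𝒲) := (fun p : 𝒴 × 𝒲 => (p.1, S p.1 p.2)) ⁻¹' (A' ×ˢ B') with hs_def
    have hs : MeasurableSet s := hT (hA'.prod hB')
    have hset : Y 0 ⁻¹' A' ∩ Wt 1 ⁻¹' B' = (fun ω => (Y 0 ω, Wt 0 ω)) ⁻¹' s := by
      ext ω
      simp only [Set.mem_inter_iff, Set.mem_preimage, hs_def, Set.mem_prod, hrec 0 ω]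
    rw [hset, ← Measure.map_apply hpairYW0 hs]
    have hκ : condDistrib (Wt 0) (Y 0) μ = (μ.map fun ω => (Y 0 ω, Wt 0 ω)).condKernel := by
      rw [condDistrib_def]
    have hfst : (μ.map fun ω => (Y 0 ω, Wt 0 ω)).fst = ρ := Measure.fst_map_prodMk (hWt 0)
    have hdisint : ρ ⊗ₘ condDistrib (Wt 0) (Y 0) μ = μ.map fun ω => (Y 0 ω, Wt 0 ω) := by
      rw [hκ, ← hfst]
      exact Measure.disintegrate _ _
    rw [← hdisint, Measure.compProd_apply hs]
    have hsec : ∀ y, (condDistrib (Wt 0) (Y 0) μ) y (Prod.mk y ⁻¹' s)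
        = A'.indicator (fun y => (condDistrib (Wt 0) (Y 0) μ) y (S y ⁻¹' B')) y := by
      intro y
      by_cases hy : y ∈ A'
      · have h1 : Prod.mk y ⁻¹' s = S y ⁻¹' B' := by
          ext w; simp [hs_def, Set.mem_prod, hy]
        rw [h1, Set.indicator_of_mem hy]
      · have h1 : Prod.mk y ⁻¹' s = ∅ := by
          ext w; simp [hs_def, Set.mem_prod, hy]
        rw [h1, Set.indicator_of_notMem hy]; simp
    rw [lintegral_congr hsec, lintegral_indicator hA']
    have hae : ∀ᵐ y ∂ρ, (condDistrib (Wt 0) (Y 0) μ) y (S y ⁻¹' B') = π B' := by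
      filter_upwards [hPM] with y hy
      have hSy : Measurable (S y) := hS.comp measurable_prodMk_left
      rw [← Measure.map_apply hSy hB', hy, hπ]
    rw [lintegral_congr_ae (ae_restrict_of_ae hae), setLIntegral_const, mul_comm]
  have hWt1law : μ.map (Wt 1) = π := by
    ext B' hB'
    rw [Measure.map_apply (hWt 1) hB']
    have h1 := hbase Set.univ B' MeasurableSet.univ hB'
    simpa [measure_univ] using h1
  -- joint law of (Wt 0, N 0) and the channel map H
  have hWN0 : IndepFun (Wt 0) (N 0) μ := by
    have h := hindep.comp measurable_id (measurable_pi_apply 0)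
    rw [hW0]; exact h
  have hpair0 : μ.map (fun ω => (Wt 0 ω, N 0 ω)) = π.prod PN := by
    have h := (indepFun_iff_map_prod_eq_prod_map_map
      (hWt 0).aemeasurable (hN 0).aemeasurable).mp hWN0
    rw [h, hW0]
  set H : 𝒲 × 𝒩 → 𝒴 × 𝒲 := fun p => (g p.1 p.2, S (g p.1 p.2) p.1) with hHdef
  have hHmeas : Measurable H := hg.prodMk (hS.comp (hg.prodMk measurable_fst))
  have hHid : ∀ n ω, H (Wt n ω, N n ω) = (Y n ω, Wt (n + 1) ω) := by
    intro n ω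
    rw [hHdef]
    dsimp only
    rw [← hYdef n ω, ← hrec n ω]
  have hHlaw : (π.prod PN).map H = μ.map fun ω => (Y 0 ω, Wt 1 ω) := by
    rw [← hpair0, Measure.map_map hHmeas ((hWt 0).prodMk (hN 0))]
    congr 1
    funext ω
    exact hHid 0 ω
  have hHrect : ∀ (D : Set 𝒴) (B' : Set 𝒲), MeasurableSet D → MeasurableSet B' →
      ((π.prod PN).map H) (D ×ˢ B') = ρ D * π B' := by
    intro D B' hD hB'
    rw [hHlaw, Measure.map_apply ((hY 0).prodMk (hWt 1)) (hD.prod hB')]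
    have h1 : (fun ω => (Y 0 ω, Wt 1 ω)) ⁻¹' (D ×ˢ B') = Y 0 ⁻¹' D ∩ Wt 1 ⁻¹' B' := by
      ext ω; simp [Set.mem_prod]
    rw [h1]; exact hbase D B' hD hB'
  -- The posterior matching invariant: `Wt n` has law `π` and is independent of `Y_0, …, Y_{n-1}`
  have hPMn : ∀ n, μ.map (Wt n) = π ∧ Indep (mW n) (GY n) μ := by
    intro n
    induction n with
    | zero =>
      refine ⟨by rw [hW0, hπ], ?_⟩
      have h0 : GY 0 = ⊥ := by
        refine le_antisymm (iSup₂_le fun i hi => absurd hi (Nat.not_lt_zero i)) bot_le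
      rw [h0]; exact indep_bot_right _
    | succ n ih =>
      have hmWA : mW n ≤ A n := (hWtA n n le_rfl).comap_le
      have hmNB : ∀ k, mN (n + k) ≤ B n := fun k => le_iSup (fun k => mN (n + k)) k
      have hIABn := (Indep_iff _ _ μ).mp (hAB n)
      have hWtNn : ∀ (s : Set 𝒲) (t : Set 𝒩), MeasurableSet s → MeasurableSet t →
          μ (Wt n ⁻¹' s ∩ N n ⁻¹' t) = π s * PN t := by
        intro s t hs ht
        have h1 : μ (Wt n ⁻¹' s ∩ N n ⁻¹' t) = μ (Wt n ⁻¹' s) * μ (N n ⁻¹' t) :=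
          hIABn _ _ (hmWA _ ⟨s, hs, rfl⟩) (hmNB 0 _ ⟨t, ht, rfl⟩)
        rw [h1, ← Measure.map_apply (hWt n) hs, ← Measure.map_apply (hN n) ht, ih.1,
          hident n]
      have hpairn : μ.map (fun ω => (Wt n ω, N n ω)) = π.prod PN := by
        refine (Measure.prod_eq fun s t hs ht => ?_).symm
        rw [Measure.map_apply ((hWt n).prodMk (hN n)) (hs.prod ht)]
        have h1 : (fun ω => (Wt n ω, N n ω)) ⁻¹' (s ×ˢ t) = Wt n ⁻¹' s ∩ N n ⁻¹' t := by
          ext ω; simp [Set.mem_prod]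
        rw [h1]; exact hWtNn s t hs ht
      have hlawYW : μ.map (fun ω => (Y n ω, Wt (n + 1) ω)) = (π.prod PN).map H := by
        rw [← hpairn, Measure.map_map hHmeas ((hWt n).prodMk (hN n))]
        congr 1
        funext ω
        exact (hHid n ω).symm
      have hWtlaw' : μ.map (Wt (n + 1)) = π := by
        have h1 : μ.map (Wt (n + 1)) = (μ.map (fun ω => (Y n ω, Wt (n + 1) ω))).map Prod.snd := by
          rw [Measure.map_map measurable_snd ((hY n).prodMk (hWt (n + 1)))]; rfl
        have h2 : μ.map (Wt 1) = (μ.map (fun ω => (Y 0 ω, Wt 1 ω))).map Prod.snd := by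
          rw [Measure.map_map measurable_snd ((hY 0).prodMk (hWt 1))]; rfl
        rw [h1, hlawYW, hHlaw, ← h2, hWt1law]
      have hYnlaw : μ.map (Y n) = ρ := by
        have h1 : μ.map (Y n) = (μ.map (fun ω => (Y n ω, Wt (n + 1) ω))).map Prod.fst := by
          rw [Measure.map_map measurable_fst ((hY n).prodMk (hWt (n + 1)))]; rfl
        have h2 : μ.map (Y 0) = (μ.map (fun ω => (Y 0 ω, Wt 1 ω))).map Prod.fst := by
          rw [Measure.map_map measurable_fst ((hY 0).prodMk (hWt 1))]; rfl
        rw [h1, hlawYW, hHlaw, ← h2, ← hρdef]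
      have hMGYn : Indep (M n) (GY n) μ := by
        refine indep_sup_left_aux (hmWle n) (hBle n) (hGYle n) ?_
        intro a b c ha hb hc
        have hIW := (Indep_iff _ _ μ).mp ih.2
        have h1 : (a ∩ b) ∩ c = (a ∩ c) ∩ b := by rw [Set.inter_right_comm]
        have h2 : μ ((a ∩ c) ∩ b) = μ (a ∩ c) * μ b :=
          hIABn _ _ ((hmWA a ha).inter ((hGYA n) c hc)) hb
        have h3 : μ (a ∩ c) = μ a * μ c := hIW a c ha hc
        have h4 : μ (a ∩ b) = μ a * μ b := hIABn a b (hmWA a ha) hb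
        rw [h1, h2, h3, h4]; ring
      have hcomappair : MeasurableSpace.comap (fun ω => (Wt n ω, N n ω)) inferInstance ≤ M n :=
        ((hWtM n 0).prodMk (hNM n 0)).comap_le
      have hIpairGY := (Indep_iff _ _ μ).mp (indep_of_indep_of_le_left hMGYn hcomappair)
      have hGYsucc : GY (n + 1) = mY n ⊔ GY n := by
        refine le_antisymm (iSup₂_le fun i hi => ?_) (sup_le ?_ ?_)
        · rcases Nat.lt_succ_iff_lt_or_eq.mp hi with h | h
          · calc mY i ≤ ⨆ (_ : i < n), mY i := le_iSup (fun (_ : i < n) => mY i) h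
              _ ≤ GY n := le_iSup (fun j => ⨆ (_ : j < n), mY j) i
              _ ≤ mY n ⊔ GY n := le_sup_right
          · subst h; exact le_sup_left
        · calc mY n ≤ ⨆ (_ : n < n + 1), mY n :=
              le_iSup (fun (_ : n < n + 1) => mY n) (Nat.lt_succ_self n)
            _ ≤ GY (n + 1) := le_iSup (fun j => ⨆ (_ : j < n + 1), mY j) n
        · refine iSup₂_le fun i hi => ?_
          calc mY i ≤ ⨆ (_ : i < n + 1), mY i :=
              le_iSup (fun (_ : i < n + 1) => mY i) (Nat.lt_succ_of_lt hi)
            _ ≤ GY (n + 1) := le_iSup (fun j => ⨆ (_ : j < n + 1), mY j) i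
      refine ⟨hWtlaw', ?_⟩
      rw [hGYsucc]
      -- set-level preparations
      have hsetHD : ∀ (D : Set 𝒴) (B' : Set 𝒲), Wt (n + 1) ⁻¹' B' ∩ Y n ⁻¹' D
          = (fun ω => (Wt n ω, N n ω)) ⁻¹' (H ⁻¹' (D ×ˢ B')) := by
        intro D B'
        ext ω
        simp only [Set.mem_inter_iff, Set.mem_preimage, hHid n ω, Set.mem_prod]
        tauto
      have hmeasHDB : ∀ (D : Set 𝒴) (B' : Set 𝒲), MeasurableSet D → MeasurableSet B' →
          MeasurableSet (H ⁻¹' (D ×ˢ B')) := fun D B' hD hB' => hHmeas (hD.prod hB')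
      have hμpair : ∀ (D : Set 𝒴) (B' : Set 𝒲), MeasurableSet D → MeasurableSet B' →
          μ ((fun ω => (Wt n ω, N n ω)) ⁻¹' (H ⁻¹' (D ×ˢ B'))) = ρ D * π B' := by
        intro D B' hD hB'
        rw [← Measure.map_apply ((hWt n).prodMk (hN n)) (hmeasHDB D B' hD hB'), hpairn,
          ← Measure.map_apply hHmeas (hD.prod hB')]
        exact hHrect D B' hD hB'
      refine IndepSets.indep (hmWle (n + 1)) (sup_le (hmYle n) (hGYle n))
        (@MeasurableSpace.isPiSystem_measurableSet Ω (mW (n + 1)))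
        (isPiSystem_inter_sets (mY n) (GY n))
        (@MeasurableSpace.generateFrom_measurableSet Ω (mW (n + 1))).symm
        (sup_eq_generateFrom_inter _ _) ((IndepSets_iff _ _ _).mpr ?_)
      rintro t1 t2 ht1 ⟨d, c, hd, hc, rfl⟩
      obtain ⟨B', hB', rfl⟩ := ht1
      obtain ⟨D, hD, rfl⟩ := hd
      have hμYc : μ (Y n ⁻¹' D ∩ c) = ρ D * μ c := by
        have h1 : Y n ⁻¹' D ∩ c
            = ((fun ω => (Wt n ω, N n ω)) ⁻¹' (H ⁻¹' (D ×ˢ (Set.univ : Set 𝒲)))) ∩ c := by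
          rw [← hsetHD D Set.univ]; simp
        rw [h1, hIpairGY _ c ⟨_, hmeasHDB D Set.univ hD MeasurableSet.univ, rfl⟩ hc,
          hμpair D Set.univ hD MeasurableSet.univ]
        simp [measure_univ]
      have hB'' : μ (Wt (n + 1) ⁻¹' B') = π B' := by
        rw [← Measure.map_apply (hWt (n + 1)) hB', hWtlaw']
      calc μ (Wt (n + 1) ⁻¹' B' ∩ (Y n ⁻¹' D ∩ c))
          = μ ((Wt (n + 1) ⁻¹' B' ∩ Y n ⁻¹' D) ∩ c) := by rw [Set.inter_assoc]
        _ = μ ((fun ω => (Wt n ω, N n ω)) ⁻¹' (H ⁻¹' (D ×ˢ B'))) * μ c := by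
            rw [hsetHD D B']
            exact hIpairGY _ c ⟨_, hmeasHDB D B' hD hB', rfl⟩ hc
        _ = (ρ D * π B') * μ c := by rw [hμpair D B' hD hB']
        _ = π B' * (ρ D * μ c) := by ring
        _ = μ (Wt (n + 1) ⁻¹' B') * μ (Y n ⁻¹' D ∩ c) := by rw [hB'', hμYc]
  -- σ(Wt n, N_{≥n}) is independent of σ(Y_0, …, Y_{n-1})
  have hMGY : ∀ n, Indep (M n) (GY n) μ := by
    intro n
    refine indep_sup_left_aux (hmWle n) (hBle n) (hGYle n) ?_
    intro a b c ha hb hc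
    have hIABn := (Indep_iff _ _ μ).mp (hAB n)
    have hIW := (Indep_iff _ _ μ).mp (hPMn n).2
    have hmWA : mW n ≤ A n := (hWtA n n le_rfl).comap_le
    have h1 : (a ∩ b) ∩ c = (a ∩ c) ∩ b := by rw [Set.inter_right_comm]
    have h2 : μ ((a ∩ c) ∩ b) = μ (a ∩ c) * μ b :=
      hIABn _ _ ((hmWA a ha).inter ((hGYA n) c hc)) hb
    have h3 : μ (a ∩ c) = μ a * μ c := hIW a c ha hc
    have h4 : μ (a ∩ b) = μ a * μ b := hIABn a b (hmWA a ha) hb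
    rw [h1, h2, h3, h4]; ring
  -- hence E is independent of σ(Y_{0:∞})
  have hgenEle : ∀ n, MeasurableSpace.generateFrom {E} ≤ M n := fun n =>
    MeasurableSpace.generateFrom_le fun s hs => by
      rw [Set.mem_singleton_iff.mp hs]; exact hEM n
  have hgenEmΩ : MeasurableSpace.generateFrom {E} ≤ mΩ :=
    le_trans (hgenEle 0) (hMle 0)
  have hGYindepE : ∀ n, Indep (GY n) (MeasurableSpace.generateFrom {E}) μ := fun n =>
    indep_of_indep_of_le_right (hMGY n).symm (hgenEle n)
  have hGYmono : Monotone GY := fun a b hab => iSup₂_le fun i hi =>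
    calc mY i ≤ ⨆ (_ : i < b), mY i := le_iSup (fun (_ : i < b) => mY i) (lt_of_lt_of_le hi hab)
      _ ≤ GY b := le_iSup (fun j => ⨆ (_ : j < b), mY j) i
  have hGsup : (⨆ n, GY n)
      = (⨆ n, MeasurableSpace.comap (Y n) inferInstance : MeasurableSpace Ω) := by
    refine le_antisymm (iSup_le fun n => iSup₂_le fun i _ => le_iSup _ i) (iSup_le fun i => ?_)
    calc (MeasurableSpace.comap (Y i) inferInstance : MeasurableSpace Ω)
        ≤ ⨆ (_ : i < i + 1), mY i := le_iSup (fun (_ : i < i + 1) => mY i) (Nat.lt_succ_self i)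
      _ ≤ GY (i + 1) := le_iSup (fun j => ⨆ (_ : j < i + 1), mY j) i
      _ ≤ ⨆ n, GY n := le_iSup GY (i + 1)
  have hGindepE : Indep (⨆ n, MeasurableSpace.comap (Y n) inferInstance)
      (MeasurableSpace.generateFrom {E}) μ := by
    rw [← hGsup]
    exact indep_iSup_of_monotone hGYindepE hGYle hgenEmΩ hGYmono
  -- E agrees a.e. with an event in σ(Y_{0:∞}), via reliability
  have hΨ : Measurable[MeasurableSpace.comap
      (fun ω : Ω => (W ω, fun n => Y n ω)) inferInstance]
      (fun ω : Ω => (W ω, fun n => Y n ω)) := comap_measurable _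
  have hWtΨ : ∀ k, Measurable[MeasurableSpace.comap
      (fun ω : Ω => (W ω, fun n => Y n ω)) inferInstance] (Wt k) := by
    intro k
    induction k with
    | zero =>
      rw [hW0]
      exact measurable_fst.comp hΨ
    | succ k ih =>
      have hYk : Measurable[MeasurableSpace.comap
          (fun ω : Ω => (W ω, fun n => Y n ω)) inferInstance] (Y k) :=
        (measurable_pi_apply k).comp (measurable_snd.comp hΨ)
      have heq : Wt (k + 1) = fun ω => S (Y k ω) (Wt k ω) := by funext ω; exact hrec k ω
      rw [heq]
      exact hS.comp (hYk.prodMk ih)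
  have hEcomap : MeasurableSet[MeasurableSpace.comap
      (fun ω : Ω => (W ω, fun n => Y n ω)) inferInstance] E := by
    have h1 : MeasurableSet[⨆ k, MeasurableSpace.comap (Wt (0 + k)) inferInstance] E :=
      (iInf_le (fun n => ⨆ k, MeasurableSpace.comap (Wt (n + k)) inferInstance) 0) E hE
    have h2 : (⨆ k, MeasurableSpace.comap (Wt (0 + k)) inferInstance : MeasurableSpace Ω)
        ≤ MeasurableSpace.comap (fun ω : Ω => (W ω, fun n => Y n ω)) inferInstance := by
      refine iSup_le fun k => ?_
      rw [Nat.zero_add]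
      exact (hWtΨ k).comap_le
    exact h2 E h1
  obtain ⟨D, hD, hDeq⟩ := hEcomap
  set E' : Set Ω := (fun ω => (W' ω, fun n => Y n ω)) ⁻¹' D with hE'def
  have hseqY : MeasurableSpace.comap (fun ω (n : ℕ) => Y n ω) MeasurableSpace.pi
      = ⨆ i, mY i := by
    rw [MeasurableSpace.pi, MeasurableSpace.comap_iSup]
    exact iSup_congr fun i => by rw [MeasurableSpace.comap_comp]; rfl
  have hseqYmeas : Measurable[⨆ n, MeasurableSpace.comap (Y n) inferInstance]
      (fun ω (n : ℕ) => Y n ω) := measurable_iff_comap_le.mpr hseqY.le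
  have hΨ'meas : Measurable[⨆ n, MeasurableSpace.comap (Y n) inferInstance]
      (fun ω : Ω => (W' ω, fun n => Y n ω)) := hW'meas.prodMk hseqYmeas
  have hE'G : MeasurableSet[⨆ n, MeasurableSpace.comap (Y n) inferInstance] E' := hΨ'meas hD
  have hEE' : E =ᵐ[μ] E' := by
    rw [← hDeq, Filter.eventuallyEq_set]
    filter_upwards [hWW'] with ω hω
    rw [hE'def]
    simp only [Set.mem_preimage]
    rw [hω]
  have hIE := (Indep_iff _ _ μ).mp hGindepE
  have hmul : μ (E' ∩ E) = μ E' * μ E :=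
    hIE E' E hE'G (MeasurableSpace.measurableSet_generateFrom (Set.mem_singleton E))
  have hμE' : μ E' = μ E := (measure_congr hEE').symm
  have hE'capE : μ (E' ∩ E) = μ E := by
    have h1 : (E' ∩ E : Set Ω) =ᵐ[μ] (E ∩ E : Set Ω) :=
      Filter.EventuallyEq.inter hEE'.symm (Filter.EventuallyEq.refl _ _)
    rw [measure_congr h1, Set.inter_self]
  rw [hE'capE, hμE'] at hmul
  rcases eq_or_ne (μ E) 0 with h0 | h0
  · exact Or.inl h0
  · right
    have hfin : μ E ≠ ⊤ := measure_ne_top μ E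
    have h1 : μ E * 1 = μ E * μ E := by rw [mul_one]; exact hmul
    exact ((ENNReal.mul_right_inj h0 hfin).mp h1).symm
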